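/- Given two line segments meeting at a point p with turning angle β ∈ (0, π), and a transition distance ℓ with 0 < ℓ ≤ c (the clearance parameter), the circle arc tangent to both segments at the points located at distance ℓ from p along each segment lies entirely within the safe zone determined by the clearance disk of parameter c. -/

import Mathlib

private lemma seg_point {E : Type*} [NormedAddCommGroup E] [NormedSpace ℝ E]
    (x y z : E) (r : ℝ) (hr : 0 < r) (h : z ∈ segment ℝ x y) (hd : dist y z = r) :
    0 < ‖x - y‖ ∧ z - y = (r / ‖x - y‖) • (x - y) := by
  obtain ⟨s, t, hs, ht, hst, H⟩ := h
  have hz : z - y = s • (x - y) := by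
    have htt : t = 1 - s := by linarith
    rw [← H, htt]; module
  have hnorm : s * ‖x - y‖ = r := by
    rw [dist_comm, dist_eq_norm] at hd
    rw [← hd, hz, norm_smul, Real.norm_eq_abs, abs_of_nonneg hs]
  have hpos : 0 < ‖x - y‖ := by
    rcases (norm_nonneg (x - y)).lt_or_eq with h' | h'
    · exact h'
    · exfalso; nlinarith
  refine ⟨hpos, ?_⟩
  rw [hz]
  congr 1
  field_simp
  linarith [hnorm]

private lemma inner_tangent {E : Type*} [NormedAddCommGroup E] [InnerProductSpace ℝ E]
    (m e : E) (r s : ℝ) (hs : 0 < s) (he : (inner ℝ e e : ℝ) = 1)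
    (h : (inner ℝ (r • e - m) (s • e) : ℝ) = 0) : (inner ℝ m e : ℝ) = r := by
  rw [inner_sub_left, real_inner_smul_left, real_inner_smul_right, real_inner_smul_right, he] at h
  have h4 : s * (r - inner ℝ m e) = 0 := by ring_nf; ring_nf at h; linarith
  rcases mul_eq_zero.mp h4 with h5 | h5
  · exact absurd h5 hs.ne'
  · linarith


private lemma le_of_sq_le_sq' {r d : ℝ} (hr : 0 < r) (hd : 0 ≤ d) (h : r ^ 2 ≤ d ^ 2) :
    r ≤ d := by nlinarith

private lemma deg_est {L C M : ℝ} : M - C ^ 2 ≤ L ^ 2 - 2 * (L * C) + M := by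
  nlinarith [sq_nonneg (L - C)]

private lemma convex_est {α γ A B L : ℝ} (hα : 0 ≤ α) (hγ : 0 ≤ γ) (hαγ : α + γ = 1)
    (hA : A ≤ L) (hB : B ≤ L) : α * A + γ * B ≤ L := by
  have h1 : α * A + γ * B ≤ α * L + γ * L :=
    add_le_add (mul_le_mul_of_nonneg_left hA hα) (mul_le_mul_of_nonneg_left hB hγ)
  have h2 : α * L + γ * L = L := by rw [← add_mul, hαγ, one_mul]
  linarith

private lemma sq_lt_one' {q : ℝ} (h1 : q < 1) (h2 : -1 < q) : q ^ 2 < 1 := by nlinarith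

private lemma safe_quant {k l ρ N I C : ℝ} (hl : 0 < l) (hk : 1 ≤ k) (hC : C = k * l)
    (hρ2 : ρ ^ 2 = N - l ^ 2) (hI : I ≤ l ^ 2) :
    k ^ 2 * N - C ^ 2 ≤ ρ ^ 2 - 2 * ((k - 1) * (I - N)) + (k - 1) ^ 2 * N := by
  subst hC
  nlinarith [mul_le_mul_of_nonneg_left hI (by linarith : (0:ℝ) ≤ 2 * (k - 1)),
    sq_nonneg ((k - 1) * l)]

set_option maxHeartbeats 1600000 in
/-- Two segments `[a, p]` and `[p, b]` meet at `p` with turning angle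
`β ∈ (0, π)`.  The clearance disk (center `oc`, radius `rc`) is tangent to both
segments at points `t₁`, `t₂` located at distance `c` from `p`; the safe zone
is the region between the disk and the segments, i.e. the triangle
`t₁ p t₂` minus the open disk.  The interpolating circle for a parameter
`0 < ℓ ≤ c` (center `o`, radius `ρ`) is tangent to both segments at points
`u₁`, `u₂` at distance `ℓ` from `p`; its arc between the tangency points on
the inner ℝ side of the angle is the part of the circle inside the triangle
`u₁ p u₂`.  Claim: this arc lies entirely within the safe zone. -/
theorem interpolating_arc_in_safe_zone
    (a p b oc o t₁ t₂ u₁ u₂ : EuclideanSpace ℝ (Fin 2))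
    (c ℓ rc ρ β : ℝ)
    (hc : 0 < c) (hℓ : 0 < ℓ) (hℓc : ℓ ≤ c)
    (hrc : 0 < rc) (hρ : 0 < ρ)
    (hβ : β = InnerProductGeometry.angle (p - a) (b - p))
    (hβ0 : 0 < β) (hβπ : β < π)
    -- clearance disk tangency points, at distance c from p on the segments
    (ht₁ : t₁ ∈ segment ℝ a p) (ht₂ : t₂ ∈ segment ℝ p b)
    (hdt₁ : dist p t₁ = c) (hdt₂ : dist p t₂ = c)
    (hct₁ : dist oc t₁ = rc) (hct₂ : dist oc t₂ = rc)
    (hperp₁ : inner ℝ (t₁ - oc) (p - a) = (0 : ℝ))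
    (hperp₂ : inner ℝ (t₂ - oc) (b - p) = (0 : ℝ))
    -- interpolating circle tangency points, at distance ℓ from p
    (hu₁ : u₁ ∈ segment ℝ a p) (hu₂ : u₂ ∈ segment ℝ p b)
    (hdu₁ : dist p u₁ = ℓ) (hdu₂ : dist p u₂ = ℓ)
    (hcu₁ : dist o u₁ = ρ) (hcu₂ : dist o u₂ = ρ)
    (hperp₁' : inner ℝ (u₁ - o) (p - a) = (0 : ℝ))
    (hperp₂' : inner ℝ (u₂ - o) (b - p) = (0 : ℝ))
    -- both centers lie on the inner ℝ side: on the inner ℝ bisector of the angle at p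
    (hbis : InnerProductGeometry.angle (a - p) (oc - p)
          = InnerProductGeometry.angle (b - p) (oc - p))
    (hbis' : InnerProductGeometry.angle (a - p) (o - p)
           = InnerProductGeometry.angle (b - p) (o - p)) :
    Metric.sphere o ρ ∩ convexHull ℝ {u₁, p, u₂} ⊆
      convexHull ℝ {t₁, p, t₂} \ Metric.ball oc rc := by
  have ht₂' : t₂ ∈ segment ℝ b p := by rw [segment_symm]; exact ht₂
  have hu₂' : u₂ ∈ segment ℝ b p := by rw [segment_symm]; exact hu₂
  obtain ⟨hna, ht1e⟩ := seg_point a p t₁ c hc ht₁ hdt₁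
  obtain ⟨hnb, ht2e⟩ := seg_point b p t₂ c hc ht₂' hdt₂
  obtain ⟨-, hu1e⟩ := seg_point a p u₁ ℓ hℓ hu₁ hdu₁
  obtain ⟨-, hu2e⟩ := seg_point b p u₂ ℓ hℓ hu₂' hdu₂
  have hva : a - p ≠ 0 := by intro h; rw [h, norm_zero] at hna; exact lt_irrefl 0 hna
  have hvb : b - p ≠ 0 := by intro h; rw [h, norm_zero] at hnb; exact lt_irrefl 0 hnb
  obtain ⟨e₁, he₁def⟩ : ∃ e : EuclideanSpace ℝ (Fin 2), e = ‖a - p‖⁻¹ • (a - p) := ⟨_, rfl⟩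
  obtain ⟨e₂, he₂def⟩ : ∃ e : EuclideanSpace ℝ (Fin 2), e = ‖b - p‖⁻¹ • (b - p) := ⟨_, rfl⟩
  obtain ⟨m, hm_def⟩ : ∃ w : EuclideanSpace ℝ (Fin 2), w = oc - p := ⟨_, rfl⟩
  obtain ⟨n, hn_def⟩ : ∃ w : EuclideanSpace ℝ (Fin 2), w = o - p := ⟨_, rfl⟩
  have he1 : ‖e₁‖ = 1 := by rw [he₁def]; exact norm_smul_inv_norm hva
  have he2 : ‖e₂‖ = 1 := by rw [he₂def]; exact norm_smul_inv_norm hvb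
  have hee1 : (inner ℝ e₁ e₁ : ℝ) = 1 := by
    rw [real_inner_self_eq_norm_sq, he1]; norm_num
  have hee2 : (inner ℝ e₂ e₂ : ℝ) = 1 := by
    rw [real_inner_self_eq_norm_sq, he2]; norm_num
  have ht1e' : t₁ - p = c • e₁ := by
    rw [ht1e, he₁def, smul_smul, div_eq_mul_inv]
  have ht2e' : t₂ - p = c • e₂ := by
    rw [ht2e, he₂def, smul_smul, div_eq_mul_inv]
  have hu1e' : u₁ - p = ℓ • e₁ := by
    rw [hu1e, he₁def, smul_smul, div_eq_mul_inv]
  have hu2e' : u₂ - p = ℓ • e₂ := by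
    rw [hu2e, he₂def, smul_smul, div_eq_mul_inv]
  have hv1 : ‖a - p‖ • e₁ = a - p := by
    rw [he₁def, smul_smul, mul_inv_cancel₀ hna.ne', one_smul]
  have hv2 : ‖b - p‖ • e₂ = b - p := by
    rw [he₂def, smul_smul, mul_inv_cancel₀ hnb.ne', one_smul]
  -- inner ℝ products of centers with unit directions
  have hm1 : (inner ℝ m e₁ : ℝ) = c := by
    apply inner_tangent m e₁ c ‖a - p‖ hna hee1
    have h : (inner ℝ (t₁ - oc) (p - a) : ℝ) = 0 := hperp₁
    rw [show t₁ - oc = c • e₁ - m by rw [← ht1e', hm_def]; abel,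
      show p - a = -(‖a - p‖ • e₁) by rw [hv1]; abel, inner_neg_right, neg_eq_zero] at h
    exact h
  have hm2 : (inner ℝ m e₂ : ℝ) = c := by
    apply inner_tangent m e₂ c ‖b - p‖ hnb hee2
    have h : (inner ℝ (t₂ - oc) (b - p) : ℝ) = 0 := hperp₂
    rw [show t₂ - oc = c • e₂ - m by rw [← ht2e', hm_def]; abel, ← hv2] at h
    exact h
  have hn1 : (inner ℝ n e₁ : ℝ) = ℓ := by
    apply inner_tangent n e₁ ℓ ‖a - p‖ hna hee1
    have h : (inner ℝ (u₁ - o) (p - a) : ℝ) = 0 := hperp₁'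
    rw [show u₁ - o = ℓ • e₁ - n by rw [← hu1e', hn_def]; abel,
      show p - a = -(‖a - p‖ • e₁) by rw [hv1]; abel, inner_neg_right, neg_eq_zero] at h
    exact h
  have hn2 : (inner ℝ n e₂ : ℝ) = ℓ := by
    apply inner_tangent n e₂ ℓ ‖b - p‖ hnb hee2
    have h : (inner ℝ (u₂ - o) (b - p) : ℝ) = 0 := hperp₂'
    rw [show u₂ - o = ℓ • e₂ - n by rw [← hu2e', hn_def]; abel, ← hv2] at h
    exact h
  -- radii in terms of center distances
  have hrc2 : rc ^ 2 = ‖m‖ ^ 2 - c ^ 2 := by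
    have h : rc = ‖c • e₁ - m‖ := by
      rw [← hct₁, dist_eq_norm, norm_sub_rev]
      congr 1
      rw [← ht1e', hm_def]; abel
    have hip : (inner ℝ (c • e₁) m : ℝ) = c * c := by
      rw [real_inner_smul_left, real_inner_comm, hm1]
    have hns : ‖c • e₁‖ = c := by
      rw [norm_smul, he1, Real.norm_eq_abs, abs_of_pos hc, mul_one]
    rw [h, norm_sub_sq_real, hip, hns]; ring
  have hρ2 : ρ ^ 2 = ‖n‖ ^ 2 - ℓ ^ 2 := by
    have h : ρ = ‖ℓ • e₁ - n‖ := by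
      rw [← hcu₁, dist_eq_norm, norm_sub_rev]
      congr 1
      rw [← hu1e', hn_def]; abel
    have hip : (inner ℝ (ℓ • e₁) n : ℝ) = ℓ * ℓ := by
      rw [real_inner_smul_left, real_inner_comm, hn1]
    have hns : ‖ℓ • e₁‖ = ℓ := by
      rw [norm_smul, he1, Real.norm_eq_abs, abs_of_pos hℓ, mul_one]
    rw [h, norm_sub_sq_real, hip, hns]; ring
  -- triangle inclusion: the small triangle is contained in the big one
  have hu₁seg : u₁ ∈ segment ℝ p t₁ := by
    have hℓc' : ℓ / c ≤ 1 := div_le_one_of_le₀ hℓc hc.le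
    have hℓc0 : 0 ≤ ℓ / c := div_nonneg hℓ.le hc.le
    refine ⟨1 - ℓ / c, ℓ / c, by linarith, hℓc0, by ring, ?_⟩
    have ht1'' : t₁ = p + c • e₁ := by rw [← ht1e']; abel
    have hu1'' : u₁ = p + ℓ • e₁ := by rw [← hu1e']; abel
    rw [ht1'', hu1'', smul_add, smul_smul, div_mul_cancel₀ _ hc.ne']
    module
  have hu₂seg : u₂ ∈ segment ℝ p t₂ := by
    have hℓc' : ℓ / c ≤ 1 := div_le_one_of_le₀ hℓc hc.le
    have hℓc0 : 0 ≤ ℓ / c := div_nonneg hℓ.le hc.le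
    refine ⟨1 - ℓ / c, ℓ / c, by linarith, hℓc0, by ring, ?_⟩
    have ht2'' : t₂ = p + c • e₂ := by rw [← ht2e']; abel
    have hu2'' : u₂ = p + ℓ • e₂ := by rw [← hu2e']; abel
    rw [ht2'', hu2'', smul_add, smul_smul, div_mul_cancel₀ _ hc.ne']
    module
  have hsub : convexHull ℝ ({u₁, p, u₂} : Set (EuclideanSpace ℝ (Fin 2))) ⊆
      convexHull ℝ ({t₁, p, t₂} : Set (EuclideanSpace ℝ (Fin 2))) := by
    apply convexHull_min _ (convex_convexHull ℝ _)
    intro y hy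
    simp only [Set.mem_insert_iff, Set.mem_singleton_iff] at hy
    rcases hy with rfl | rfl | rfl
    · exact segment_subset_convexHull (by simp) (by simp) hu₁seg
    · exact subset_convexHull ℝ _ (by simp)
    · exact segment_subset_convexHull (by simp) (by simp) hu₂seg
  -- key quantitative fact about points of the small triangle on the sphere
  intro x hx
  obtain ⟨hxs, hxh⟩ := hx
  have hxo : ‖x - o‖ = ρ := by
    have := Metric.mem_sphere.mp hxs; rwa [dist_eq_norm] at this
  refine ⟨hsub hxh, ?_⟩
  rw [Metric.mem_ball, not_lt]
  by_cases hdeg : e₁ = e₂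
  · -- degenerate case: the two directions coincide, the "triangle" is a segment
    have hu12 : u₂ = u₁ := by
      have h : u₂ - p = u₁ - p := by rw [hu1e', hu2e', hdeg]
      have := sub_left_injective h; exact this
    have hxh' : x ∈ segment ℝ u₁ p := by
      have hset : ({u₁, p, u₂} : Set (EuclideanSpace ℝ (Fin 2))) = {u₁, p} := by
        rw [hu12]; ext y; simp; tauto
      rw [hset, convexHull_pair] at hxh
      exact hxh
    obtain ⟨s, t, hs, ht, hst, hxeq⟩ := hxh'
    have hxp : x - p = (s * ℓ) • e₁ := by
      have hu1'' : u₁ = p + ℓ • e₁ := by rw [← hu1e']; abel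
      have htt : t = 1 - s := by linarith
      rw [← hxeq, hu1'', htt, mul_smul]
      module
    have hxo2 : ρ ^ 2 = (s * ℓ) ^ 2 - 2 * ((s * ℓ) * ℓ) + ‖n‖ ^ 2 := by
      have h : x - o = (s * ℓ) • e₁ - n := by rw [hn_def, ← hxp]; abel
      have hip : (inner ℝ ((s * ℓ) • e₁) n : ℝ) = (s * ℓ) * ℓ := by
        rw [real_inner_smul_left, real_inner_comm, hn1]
      have hns : ‖(s * ℓ) • e₁‖ ^ 2 = (s * ℓ) ^ 2 := by
        rw [norm_smul, he1, Real.norm_eq_abs, mul_one, sq_abs]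
      rw [← hxo, h, norm_sub_sq_real, hip, hns]
    have hsq : (s - 1) ^ 2 * ℓ ^ 2 = 0 := by linear_combination hρ2 - hxo2
    have hs1 : s = 1 := by
      have h0 : (s - 1) ^ 2 = 0 := by
        rcases mul_eq_zero.mp hsq with h | h
        · exact h
        · exact absurd h (pow_ne_zero 2 hℓ.ne')
      have h1 : s - 1 = 0 := sq_eq_zero_iff.mp h0
      linarith
    have hxu : x = u₁ := by
      have htt : t = 0 := by linarith
      rw [hs1, htt, one_smul, zero_smul, add_zero] at hxeq
      exact hxeq.symm
    -- distance from oc to u₁ is at least rc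
    have hd2 : rc ^ 2 ≤ (dist x oc) ^ 2 := by
      have h : x - oc = ℓ • e₁ - m := by rw [hxu, hm_def, ← hu1e']; abel
      have hip : (inner ℝ (ℓ • e₁) m : ℝ) = ℓ * c := by
        rw [real_inner_smul_left, real_inner_comm, hm1]
      have hns : ‖ℓ • e₁‖ ^ 2 = ℓ ^ 2 := by
        rw [norm_smul, he1, Real.norm_eq_abs, mul_one, sq_abs]
      rw [dist_eq_norm, h, norm_sub_sq_real, hip, hns, hrc2]
      exact deg_est
    exact le_of_sq_le_sq' hrc dist_nonneg hd2
  · -- nondegenerate case: the two unit directions are independent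
    have hq1 : (inner ℝ e₁ e₂ : ℝ) < 1 := by
      have hle : (inner ℝ e₁ e₂ : ℝ) ≤ 1 := by
        have h := real_inner_le_norm e₁ e₂
        rw [he1, he2, mul_one] at h; exact h
      rcases lt_or_eq_of_le hle with h | h
      · exact h
      · exact absurd ((inner_eq_one_iff_of_norm_eq_one he1 he2).mp h) hdeg
    have hq2 : -1 < (inner ℝ e₁ e₂ : ℝ) := by
      by_contra hcon
      push_neg at hcon
      have habs : |(inner ℝ e₁ e₂ : ℝ)| ≤ 1 := by
        have := abs_real_inner_le_norm e₁ e₂; rwa [he1, he2, mul_one] at this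
      have hqeq : (inner ℝ e₁ e₂ : ℝ) = -1 := by
        rcases abs_le.mp habs with ⟨h1, h2⟩; linarith
      have hminus : (inner ℝ e₁ (-e₂) : ℝ) = 1 := by rw [inner_neg_right, hqeq]; ring
      have hne2 : ‖-e₂‖ = 1 := by rw [norm_neg, he2]
      have he12 : e₁ = -e₂ := (inner_eq_one_iff_of_norm_eq_one he1 hne2).mp hminus
      -- then β = angle (p - a) (b - p) = 0, contradiction
      have hpa : p - a = ‖a - p‖ • (-e₁) := by rw [smul_neg, hv1]; abel
      have hbp : b - p = ‖b - p‖ • (-e₁) := by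
        have hminus' : -e₁ = e₂ := by rw [he12]; simp
        rw [hminus', hv2]
      have hβeq : β = 0 := by
        rw [hβ, hpa, hbp, InnerProductGeometry.angle_smul_left_of_pos _ _ hna,
          InnerProductGeometry.angle_smul_right_of_pos _ _ hnb,
          InnerProductGeometry.angle_self]
        intro h0
        rw [neg_eq_zero] at h0
        rw [h0, norm_zero] at he1
        norm_num at he1
      rw [hβeq] at hβ0
      exact lt_irrefl 0 hβ0
    set q : ℝ := inner ℝ e₁ e₂ with hq_def
    have hqsq : q ^ 2 < 1 := sq_lt_one' hq1 hq2
    -- linear independence of the two directions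
    have hLI : LinearIndependent ℝ ![e₁, e₂] := by
      rw [LinearIndependent.pair_iff]
      intro s t hst
      have hA : (inner ℝ (s • e₁ + t • e₂) e₁ : ℝ) = s + t * q := by
        rw [inner_add_left, real_inner_smul_left, real_inner_smul_left, hee1,
          real_inner_comm e₁ e₂, ← hq_def]
        ring
      have hB : (inner ℝ (s • e₁ + t • e₂) e₂ : ℝ) = s * q + t := by
        rw [inner_add_left, real_inner_smul_left, real_inner_smul_left, hee2, ← hq_def]
        ring
      rw [hst, inner_zero_left] at hA hB
      have hne : 1 - q ^ 2 ≠ 0 := by intro h; rw [sub_eq_zero] at h; rw [← h] at hqsq; linarith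
      have hs0 : s * (1 - q ^ 2) = 0 := by linear_combination (-1 : ℝ) * hA + q * hB
      have ht0 : t * (1 - q ^ 2) = 0 := by linear_combination q * hA + (-1 : ℝ) * hB
      constructor
      · rcases mul_eq_zero.mp hs0 with h | h
        · exact h
        · exact absurd h hne
      · rcases mul_eq_zero.mp ht0 with h | h
        · exact h
        · exact absurd h hne
    have hspan : Submodule.span ℝ ({e₁, e₂} : Set (EuclideanSpace ℝ (Fin 2))) = ⊤ := by
      have h1 : Set.range ![e₁, e₂] = {e₁, e₂} := by
        ext y; simp [Fin.exists_fin_two, or_comm]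
      rw [← h1]
      exact hLI.span_eq_top_of_card_eq_finrank (by simp [finrank_euclideanSpace_fin])
    -- the two centers are collinear with p : m = (c/ℓ) • n
    have hK : m = (c / ℓ) • n := by
      have hz1 : (inner ℝ (m - (c / ℓ) • n) e₁ : ℝ) = 0 := by
        rw [inner_sub_left, real_inner_smul_left, hm1, hn1]
        field_simp; ring
      have hz2 : (inner ℝ (m - (c / ℓ) • n) e₂ : ℝ) = 0 := by
        rw [inner_sub_left, real_inner_smul_left, hm2, hn2]
        field_simp; ring
      have hzspan : m - (c / ℓ) • n ∈
          Submodule.span ℝ ({e₁, e₂} : Set (EuclideanSpace ℝ (Fin 2))) := by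
        rw [hspan]; trivial
      obtain ⟨s, t, hst⟩ := Submodule.mem_span_pair.mp hzspan
      have hzz : (inner ℝ (m - (c / ℓ) • n) (m - (c / ℓ) • n) : ℝ) = 0 := by
        have h : (inner ℝ (m - (c / ℓ) • n) (m - (c / ℓ) • n) : ℝ)
            = inner ℝ (m - (c / ℓ) • n) (s • e₁ + t • e₂) := by rw [hst]
        rw [inner_add_right, real_inner_smul_right, real_inner_smul_right, hz1, hz2] at h
        simpa using h
      have hz0 : m - (c / ℓ) • n = 0 := inner_self_eq_zero.mp hzz
      exact sub_eq_zero.mp hz0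
    -- linear functional bound on the small triangle
    have hlin : (inner ℝ n (x - p) : ℝ) ≤ ℓ ^ 2 := by
      have hhull : convexHull ℝ ({u₁, p, u₂} : Set (EuclideanSpace ℝ (Fin 2))) ⊆
          {y | (inner ℝ n (y - p) : ℝ) ≤ ℓ ^ 2} := by
        apply convexHull_min
        · intro y hy
          simp only [Set.mem_insert_iff, Set.mem_singleton_iff] at hy
          rcases hy with rfl | rfl | rfl
          · simp only [Set.mem_setOf_eq]
            rw [hu1e', real_inner_smul_right, hn1]
            exact le_of_eq (by ring)
          · simp only [Set.mem_setOf_eq, sub_self, inner_zero_right]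
            positivity
          · simp only [Set.mem_setOf_eq]
            rw [hu2e', real_inner_smul_right, hn2]
            exact le_of_eq (by ring)
        · intro y hy z hz α γ hα hγ hαγ
          simp only [Set.mem_setOf_eq] at hy hz ⊢
          have hsplit : α • y + γ • z - p = α • (y - p) + γ • (z - p) + (α + γ - 1) • p := by
            module
          rw [hsplit, hαγ]
          simp only [sub_self, zero_smul, add_zero]
          rw [inner_add_right, real_inner_smul_right, real_inner_smul_right]
          exact convex_est hα hγ hαγ hy hz
      exact hhull hxh
    -- quantitative estimate
    have hxoc : x - oc = (x - o) - ((c / ℓ - 1) • n) := by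
      rw [sub_smul, one_smul, ← hK, hm_def, hn_def]; abel
    have hxon : (inner ℝ (x - o) n : ℝ) = inner ℝ n (x - p) - ‖n‖ ^ 2 := by
      have h : x - o = (x - p) - n := by rw [hn_def]; abel
      rw [h, inner_sub_left, real_inner_comm (x - p) n, real_inner_self_eq_norm_sq]
    have hnormm : ‖m‖ ^ 2 = (c / ℓ) ^ 2 * ‖n‖ ^ 2 := by
      rw [hK, norm_smul, Real.norm_eq_abs, abs_of_pos (div_pos hc hℓ), mul_pow]
    have hd2 : rc ^ 2 ≤ (dist x oc) ^ 2 := by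
      have hxn : ‖(c / ℓ - 1) • n‖ ^ 2 = (c / ℓ - 1) ^ 2 * ‖n‖ ^ 2 := by
        rw [norm_smul, Real.norm_eq_abs, mul_pow, sq_abs]
      rw [dist_eq_norm, hxoc, norm_sub_sq_real, real_inner_smul_right, hxon, hxo,
        hxn, hrc2, hnormm]
      have hk1 : 1 ≤ c / ℓ := (one_le_div hℓ).mpr hℓc
      have hcl : c = (c / ℓ) * ℓ := (div_mul_cancel₀ _ hℓ.ne').symm
      exact safe_quant hℓ hk1 hcl hρ2 hlin
    exact le_of_sq_le_sq' hrc dist_nonneg hd2
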